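/- If R is a ring possessing a non-injective simple indigent right R-module U such that Hom(E, U) = 0 for every injective right R-module E, then R is right hereditary and right Noetherian. -/

import Mathlib

universe u

open LinearMap MulOpposite

/-! Character module -/

/-- The character group `M⁺ = Hom_ℤ(M, ℚ/ℤ)`. -/
abbrev CharMod (M : Type u) [AddCommGroup M] : Type u := M →+ AddCircle (1 : ℚ)

/-- If `M` is a left `S`-module, then `M⁺` is a right `S`-module via `(f • r) m = f (r • m)`. -/
instance CharMod.moduleRight (S : Type u) [Ring S] (M : Type u) [AddCommGroup M]
    [Module S M] : Module Sᵐᵒᵖ (CharMod M) where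
  smul r f := f.comp (DistribMulAction.toAddMonoidHom M (unop r))
  one_smul f := by
    apply AddMonoidHom.ext; intro m
    show f ((unop (1 : Sᵐᵒᵖ)) • m) = f m
    simp
  mul_smul r s f := by
    apply AddMonoidHom.ext; intro m
    show f ((unop (r * s)) • m) = f ((unop s) • ((unop r) • m))
    simp [mul_smul]
  smul_zero r := by apply AddMonoidHom.ext; intro m; rfl
  smul_add r f g := by apply AddMonoidHom.ext; intro m; rfl
  add_smul r s f := by
    apply AddMonoidHom.ext; intro m
    show f ((unop (r + s)) • m) = f ((unop r) • m) + f ((unop s) • m)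
    rw [unop_add, add_smul, map_add]
  zero_smul f := by
    apply AddMonoidHom.ext; intro m
    show f ((unop (0 : Sᵐᵒᵖ)) • m) = 0
    simp

/-- If `M` is a right `S`-module, then `M⁺` is a left `S`-module via `(r • f) m = f (m • r)`. -/
instance CharMod.moduleLeft (S : Type u) [Ring S] (M : Type u) [AddCommGroup M]
    [Module Sᵐᵒᵖ M] : Module S (CharMod M) where
  smul r f := f.comp (DistribMulAction.toAddMonoidHom M (op r))
  one_smul f := by
    apply AddMonoidHom.ext; intro m
    show f ((op (1 : S)) • m) = f m
    simp
  mul_smul r s f := by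
    apply AddMonoidHom.ext; intro m
    show f ((op (r * s)) • m) = f ((op s) • ((op r) • m))
    rw [← mul_smul, ← op_mul]
  smul_zero r := by apply AddMonoidHom.ext; intro m; rfl
  smul_add r f g := by apply AddMonoidHom.ext; intro m; rfl
  add_smul r s f := by
    apply AddMonoidHom.ext; intro m
    show f ((op (r + s)) • m) = f ((op r) • m) + f ((op s) • m)
    rw [op_add, add_smul, map_add]
  zero_smul f := by
    apply AddMonoidHom.ext; intro m
    show f ((op (0 : S)) • m) = 0
    simp

/-! Tensor product of a right module and a left module over a (possibly noncommutative) ring -/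

section Tensor

variable (S : Type u) [Ring S]

/-- The bilinearity relations defining `M ⊗_S N` as a quotient of `M ⊗_ℤ N`. -/
def tensorRel (M N : Type u) [AddCommGroup M] [Module Sᵐᵒᵖ M] [AddCommGroup N] [Module S N] :
    Submodule ℤ (TensorProduct ℤ M N) :=
  Submodule.span ℤ {x | ∃ (m : M) (r : S) (n : N),
    x = (op r • m) ⊗ₜ[ℤ] n - m ⊗ₜ[ℤ] (r • n)}

/-- `M ⊗_S N` for a right `S`-module `M` and a left `S`-module `N`. -/
def RTensor (M N : Type u) [AddCommGroup M] [Module Sᵐᵒᵖ M] [AddCommGroup N] [Module S N] :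
    Type u := TensorProduct ℤ M N ⧸ tensorRel S M N

noncomputable instance (M N : Type u) [AddCommGroup M] [Module Sᵐᵒᵖ M] [AddCommGroup N] [Module S N] :
    AddCommGroup (RTensor S M N) :=
  inferInstanceAs (AddCommGroup (TensorProduct ℤ M N ⧸ tensorRel S M N))

/-- Functoriality of `M ⊗_S -` in the left-module variable. -/
noncomputable def rTensorMap (M : Type u) [AddCommGroup M] [Module Sᵐᵒᵖ M] {N B : Type u}
    [AddCommGroup N] [Module S N] [AddCommGroup B] [Module S B] (g : N →ₗ[S] B) :
    RTensor S M N →ₗ[ℤ] RTensor S M B :=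
  Submodule.mapQ _ _ (TensorProduct.map LinearMap.id g.toAddMonoidHom.toIntLinearMap)
    (by
      rw [tensorRel, Submodule.span_le]
      rintro x ⟨m, r, n, rfl⟩
      refine Submodule.subset_span ⟨m, r, g n, ?_⟩
      change TensorProduct.map _ _ ((op r • m) ⊗ₜ[ℤ] n - m ⊗ₜ[ℤ] (r • n)) = _
      rw [map_sub, TensorProduct.map_tmul, TensorProduct.map_tmul]
      simp only [LinearMap.id_apply, AddMonoidHom.coe_toIntLinearMap, LinearMap.toAddMonoidHom_coe]
      rw [map_smul])

/-- Functoriality of `- ⊗_S N` in the right-module variable. -/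
noncomputable def lTensorMap {M B : Type u} [AddCommGroup M] [Module Sᵐᵒᵖ M] [AddCommGroup B]
    [Module Sᵐᵒᵖ B] (h : M →ₗ[Sᵐᵒᵖ] B) (N : Type u) [AddCommGroup N] [Module S N] :
    RTensor S M N →ₗ[ℤ] RTensor S B N :=
  Submodule.mapQ _ _ (TensorProduct.map h.toAddMonoidHom.toIntLinearMap LinearMap.id)
    (by
      rw [tensorRel, Submodule.span_le]
      rintro x ⟨m, r, n, rfl⟩
      refine Submodule.subset_span ⟨h m, r, n, ?_⟩
      change TensorProduct.map _ _ ((op r • m) ⊗ₜ[ℤ] n - m ⊗ₜ[ℤ] (r • n)) = _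
      rw [map_sub, TensorProduct.map_tmul, TensorProduct.map_tmul]
      simp only [LinearMap.id_apply, AddMonoidHom.coe_toIntLinearMap, LinearMap.toAddMonoidHom_coe]
      rw [map_smul])

end Tensor

/-! Basic relative homological notions -/

section Defs

variable (S : Type u) [Ring S]

/-- `M` is `N`-subinjective: every map `N → M` extends along every embedding of `N`. -/
def Subinjective (N M : Type u) [AddCommGroup N] [Module S N] [AddCommGroup M]
    [Module S M] : Prop :=
  ∀ (K : Type u) [AddCommGroup K] [Module S K] (i : N →ₗ[S] K), Function.Injective i →
    ∀ f : N →ₗ[S] M, ∃ h : K →ₗ[S] M, h ∘ₗ i = f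

/-- `M` is an injective module. -/
def InjMod (M : Type u) [AddCommGroup M] [Module S M] : Prop :=
  ∀ (N : Type u) [AddCommGroup N] [Module S N], Subinjective S N M

/-- `M` is `N`-subprojective. -/
def Subprojective (M N : Type u) [AddCommGroup M] [Module S M] [AddCommGroup N]
    [Module S N] : Prop :=
  ∀ (B : Type u) [AddCommGroup B] [Module S B] (g : B →ₗ[S] N), Function.Surjective g →
    ∀ f : M →ₗ[S] N, ∃ h : M →ₗ[S] B, g ∘ₗ h = f

/-- A monomorphism of left `S`-modules is pure if it stays injective after
tensoring with any right `S`-module. -/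
def IsPureMono {A B : Type u} [AddCommGroup A] [Module S A] [AddCommGroup B] [Module S B]
    (i : A →ₗ[S] B) : Prop :=
  Function.Injective i ∧
    ∀ (M : Type u) [AddCommGroup M] [Module Sᵐᵒᵖ M], Function.Injective (rTensorMap S M i)

/-- `N` is absolutely pure (fp-injective): every embedding of `N` is pure. -/
def AbsPure (N : Type u) [AddCommGroup N] [Module S N] : Prop :=
  ∀ (K : Type u) [AddCommGroup K] [Module S K] (i : N →ₗ[S] K), Function.Injective i →
    IsPureMono S i

/-- `N` is absolutely `M`-pure, for a right module `M`. -/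
def AbsMPure (M : Type u) [AddCommGroup M] [Module Sᵐᵒᵖ M] (N : Type u) [AddCommGroup N]
    [Module S N] : Prop :=
  ∀ (B : Type u) [AddCommGroup B] [Module S B] (i : N →ₗ[S] B), Function.Injective i →
    Function.Injective (rTensorMap S M i)

/-- `M` is pure-injective: maps into `M` extend along pure monomorphisms. -/
def PureInjective (M : Type u) [AddCommGroup M] [Module S M] : Prop :=
  ∀ (A B : Type u) [AddCommGroup A] [Module S A] [AddCommGroup B] [Module S B]
    (i : A →ₗ[S] B), IsPureMono S i → ∀ f : A →ₗ[S] M, ∃ h : B →ₗ[S] M, h ∘ₗ i = f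

/-- `M` is indigent: its subinjectivity domain is exactly the injective modules. -/
def Indigent (M : Type u) [AddCommGroup M] [Module S M] : Prop :=
  ∀ (N : Type u) [AddCommGroup N] [Module S N], Subinjective S N M ↔ InjMod S N

/-- `M` is pi-indigent: `M` is pure-injective and its subinjectivity domain is exactly
the absolutely pure modules. -/
def PiIndigent (M : Type u) [AddCommGroup M] [Module S M] : Prop :=
  PureInjective S M ∧
    ∀ (N : Type u) [AddCommGroup N] [Module S N], Subinjective S N M ↔ AbsPure S N

/-- Flatness via the equational criterion. -/
def FlatMod (M : Type u) [AddCommGroup M] [Module S M] : Prop :=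
  ∀ (n : ℕ) (r : Fin n → S) (x : Fin n → M), (∑ i, r i • x i) = 0 →
    ∃ (m : ℕ) (a : Fin n → Fin m → S) (y : Fin m → M),
      (∀ i, x i = ∑ j, a i j • y j) ∧ ∀ j, (∑ i, r i * a i j) = 0

/-- Finitely presented module. -/
def FPMod (M : Type u) [AddCommGroup M] [Module S M] : Prop :=
  ∃ (n : ℕ) (K : Submodule S (Fin n → S)), K.FG ∧
    Nonempty ((((Fin n → S)) ⧸ K) ≃ₗ[S] M)

/-- `Ext¹_S(M, N) = 0`, expressed by the splitting of every extension of `N` by `M`. -/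
def ExtVanish (M N : Type u) [AddCommGroup M] [Module S M] [AddCommGroup N] [Module S N] :
    Prop :=
  ∀ (B : Type u) [AddCommGroup B] [Module S B] (i : N →ₗ[S] B) (p : B →ₗ[S] M),
    Function.Injective i → Function.Surjective p → LinearMap.range i = LinearMap.ker p →
      ∃ s : M →ₗ[S] B, p ∘ₗ s = LinearMap.id

/-- `Tor₁^S(N, T) = 0` for a right module `N` and a left module `T`. -/
def TorVanish (N : Type u) [AddCommGroup N] [Module Sᵐᵒᵖ N] (T : Type u) [AddCommGroup T]
    [Module S T] : Prop :=
  ∀ (P K : Type u) [AddCommGroup P] [Module Sᵐᵒᵖ P] [AddCommGroup K] [Module Sᵐᵒᵖ K]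
    (i : K →ₗ[Sᵐᵒᵖ] P) (p : P →ₗ[Sᵐᵒᵖ] N), Module.Projective Sᵐᵒᵖ P →
      Function.Injective i → Function.Surjective p →
        LinearMap.range i = LinearMap.ker p → Function.Injective (lTensorMap S i T)

/-- `M` is a Whitehead test module for injectivity (i-test). -/
def ITest (M : Type u) [AddCommGroup M] [Module S M] : Prop :=
  ∀ (N : Type u) [AddCommGroup N] [Module S N], ExtVanish S M N → InjMod S N

/-- `S` is (left) n-saturated: `S` is not semisimple and every finitely generated
non-projective module is i-test. -/
def NSaturated : Prop :=
  ¬ IsSemisimpleRing S ∧ ∀ (M : Type u) [AddCommGroup M] [Module S M],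
    Module.Finite S M → ¬ Module.Projective S M → ITest S M

/-- A submodule is essential if it intersects every nonzero submodule nontrivially. -/
def EssentialIn {M : Type u} [AddCommGroup M] [Module S M] (A : Submodule S M) : Prop :=
  ∀ B : Submodule S M, B ≠ ⊥ → A ⊓ B ≠ ⊥

/-- `M` is a singular module: every element is annihilated by an essential left ideal. -/
def SingularMod (M : Type u) [AddCommGroup M] [Module S M] : Prop :=
  ∀ x : M, EssentialIn S (LinearMap.ker (LinearMap.toSpanSingleton S M x))

/-- `S` is (left) nonsingular: `Z(S) = 0`. -/
def NonsingularRing : Prop :=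
  ∀ r : S, EssentialIn S (LinearMap.ker (LinearMap.toSpanSingleton S S r)) → r = 0

/-- The socle of a module: the supremum of its simple submodules. -/
def socle (M : Type u) [AddCommGroup M] [Module S M] : Submodule S M :=
  sSup {N : Submodule S M | IsAtom N}

/-- von Neumann regular ring. -/
def IsVNR : Prop := ∀ a : S, ∃ r : S, a * r * a = a

/-- (left) V-ring: every simple module is injective. -/
def VRing : Prop :=
  ∀ (M : Type u) [AddCommGroup M] [Module S M], IsSimpleModule S M → InjMod S M

/-- (left) hereditary: every left ideal is projective. -/
def HereditaryRing : Prop := ∀ I : Submodule S S, Module.Projective S I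

/-- (left) semihereditary: every finitely generated left ideal is projective. -/
def SemihereditaryRing : Prop := ∀ I : Submodule S S, I.FG → Module.Projective S I

/-- (left) SI-ring: every singular module is injective. -/
def SIRing : Prop :=
  ∀ (M : Type u) [AddCommGroup M] [Module S M], SingularMod S M → InjMod S M

/-- quasi-Frobenius ring: two-sided Noetherian and self-injective. -/
def QFRing : Prop :=
  IsNoetherianRing S ∧ IsNoetherianRing Sᵐᵒᵖ ∧ InjMod S S ∧ InjMod Sᵐᵒᵖ S

/-- A module is uniserial if its submodules are totally ordered. -/
def Uniserial (M : Type u) [AddCommGroup M] [Module S M] : Prop :=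
  ∀ A B : Submodule S M, A ≤ B ∨ B ≤ A

/-- (left) serial ring: `S` is a finite direct sum of uniserial left ideals. -/
def SerialRing : Prop :=
  ∃ (n : ℕ) (f : Fin n → Submodule S S), (∀ i, Uniserial S (f i)) ∧
    iSupIndep f ∧ iSup f = ⊤

/-- (left) coherent: every finitely generated left ideal is finitely presented. -/
def CoherentRing : Prop := ∀ I : Submodule S S, I.FG → FPMod S I

/-- Indecomposable ring: no nontrivial central idempotents. -/
def IndecompRing : Prop :=
  Nontrivial S ∧ ∀ e : S, e * e = e → (∀ r : S, e * r = r * e) → e = 0 ∨ e = 1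

end Defs
section Stmt17Aux

variable {S : Type u} [Ring S]

/-- If every map `N → U` is zero and `U` is indigent, then `N` is injective. -/
private lemma injMod_of_hom_zero {U N : Type u} [AddCommGroup U] [Module S U]
    [AddCommGroup N] [Module S N] (hind : Indigent S U)
    (h0 : ∀ f : N →ₗ[S] U, f = 0) : InjMod S N :=
  (hind N).mp (fun K _ _ i _ f => ⟨0, by rw [h0 f, LinearMap.zero_comp]⟩)

/-- Mathlib injectivity implies the custom `InjMod`. -/
private lemma injMod_of_injective {E : Type u} [AddCommGroup E] [Module S E]
    (h : Module.Injective S E) : InjMod S E := by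
  intro N _ _ K _ _ i hi f
  obtain ⟨g, hg⟩ := h.out i hi f
  exact ⟨g, LinearMap.ext hg⟩

/-- Every module embeds into a module satisfying the custom `InjMod`. -/
private lemma exists_injMod_embedding (S : Type u) [Ring S] (M : Type u)
    [AddCommGroup M] [Module S M] :
    ∃ (E : Type u) (_ : AddCommGroup E) (_ : Module S E) (e : M →ₗ[S] E),
      Function.Injective e ∧ InjMod S E := by
  let Mc : ModuleCat.{u} S := ModuleCat.of S M
  let E := CategoryTheory.Injective.under Mc
  have hEinj : CategoryTheory.Injective (ModuleCat.of S ↥E) :=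
    inferInstanceAs (CategoryTheory.Injective E)
  have hinj : Module.Injective S ↥E :=
    Module.injective_module_of_injective_object S ↥E
  refine ⟨↥E, inferInstance, inferInstance,
    ((CategoryTheory.Injective.ι Mc).hom : M →ₗ[S] ↥E), ?_, injMod_of_injective hinj⟩
  exact (ModuleCat.mono_iff_injective (CategoryTheory.Injective.ι Mc)).mp inferInstance

end Stmt17Aux

theorem stmt_17 {R : Type u} [Ring R] (U : Type u) [AddCommGroup U]
    [Module Rᵐᵒᵖ U] (hsimple : IsSimpleModule Rᵐᵒᵖ U)
    (hninj : ¬ InjMod Rᵐᵒᵖ U) (hind : Indigent Rᵐᵒᵖ U)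
    (hhom : ∀ (E : Type u) [AddCommGroup E] [Module Rᵐᵒᵖ E], InjMod Rᵐᵒᵖ E →
      ∀ f : E →ₗ[Rᵐᵒᵖ] U, f = 0) :
    HereditaryRing Rᵐᵒᵖ ∧ IsNoetherianRing Rᵐᵒᵖ := by
  classical
  -- Any surjective image of an `InjMod` module is `InjMod`.
  have lemQ : ∀ (E N : Type u) [AddCommGroup E] [Module Rᵐᵒᵖ E] [AddCommGroup N]
      [Module Rᵐᵒᵖ N], InjMod Rᵐᵒᵖ E → ∀ p : E →ₗ[Rᵐᵒᵖ] N, Function.Surjective p →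
        InjMod Rᵐᵒᵖ N := by
    intro E N _ _ _ _ hE p hp
    refine injMod_of_hom_zero hind (fun f => ?_)
    have h1 : f ∘ₗ p = 0 := hhom E hE (f ∘ₗ p)
    ext n
    obtain ⟨x, rfl⟩ := hp n
    exact LinearMap.congr_fun h1 x
  constructor
  · -- hereditary
    intro I
    refine Module.Projective.of_lifting_property ?_
    intro M N _ _ _ _ f g hf
    obtain ⟨E, _, _, e, he, hE⟩ := exists_injMod_embedding Rᵐᵒᵖ M
    set K : Submodule Rᵐᵒᵖ E := (LinearMap.ker f).map e with hK
    have hNK : InjMod Rᵐᵒᵖ (E ⧸ K) := lemQ E (E ⧸ K) hE K.mkQ K.mkQ_surjective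
    have hle : LinearMap.ker f ≤ K.comap e := fun m hm =>
      Submodule.mem_comap.mpr (Submodule.mem_map_of_mem hm)
    set ι : N →ₗ[Rᵐᵒᵖ] (E ⧸ K) :=
      (Submodule.mapQ (LinearMap.ker f) K e hle) ∘ₗ
        (f.quotKerEquivOfSurjective hf).symm.toLinearMap with hιdef
    have hιf : ∀ m : M, ι (f m) = K.mkQ (e m) := by
      intro m
      have h1 : (f.quotKerEquivOfSurjective hf).symm (f m) = Submodule.Quotient.mk m := by
        rw [LinearEquiv.symm_apply_eq]
        rfl
      show (Submodule.mapQ _ K e hle) ((f.quotKerEquivOfSurjective hf).symm (f m)) = _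
      rw [h1, Submodule.mapQ_apply, Submodule.mkQ_apply]
    obtain ⟨G, hG⟩ := hNK ↥I Rᵐᵒᵖ I.subtype I.injective_subtype (ι ∘ₗ g)
    obtain ⟨y₀, hy₀⟩ := K.mkQ_surjective (G 1)
    have key : ∀ x : ↥I, ∃ m : M, e m = (x : Rᵐᵒᵖ) • y₀ ∧ f m = g x := by
      intro x
      have h2 : K.mkQ ((x : Rᵐᵒᵖ) • y₀) = ι (g x) := by
        rw [map_smul, hy₀]
        calc (x : Rᵐᵒᵖ) • G 1 = G ((x : Rᵐᵒᵖ) • (1 : Rᵐᵒᵖ)) := (map_smul G _ _).symm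
          _ = G ((x : Rᵐᵒᵖ)) := by rw [smul_eq_mul, mul_one]
          _ = ι (g x) := LinearMap.congr_fun hG x
      obtain ⟨m₀, hm₀⟩ := hf (g x)
      have h4 : K.mkQ ((x : Rᵐᵒᵖ) • y₀ - e m₀) = 0 := by
        rw [map_sub, h2, ← hm₀, hιf m₀, sub_self]
      have h5 : (x : Rᵐᵒᵖ) • y₀ - e m₀ ∈ K := by
        rwa [Submodule.mkQ_apply, Submodule.Quotient.mk_eq_zero] at h4
      obtain ⟨k, hk, hek⟩ := h5
      refine ⟨m₀ + k, ?_, ?_⟩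
      · rw [map_add, hek]; abel
      · rw [map_add, LinearMap.mem_ker.mp hk, add_zero, hm₀]
    choose m hm1 hm2 using key
    refine ⟨{ toFun := m, map_add' := ?_, map_smul' := ?_ }, ?_⟩
    · intro x y
      apply he
      rw [map_add, hm1, hm1, hm1, Submodule.coe_add, add_smul]
    · intro r x
      apply he
      simp only [RingHom.id_apply]
      rw [hm1, map_smul, hm1, Submodule.coe_smul, smul_eq_mul, mul_smul]
    · ext x
      exact hm2 x
  · -- noetherian
    rw [isNoetherianRing_iff, ← monotone_stabilizes_iff_noetherian]
    intro c
    choose E acg mod e he hE using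
      fun n : ℕ => exists_injMod_embedding Rᵐᵒᵖ (Rᵐᵒᵖ ⧸ c n)
    letI : ∀ n, AddCommGroup (E n) := acg
    letI : ∀ n, Module Rᵐᵒᵖ (E n) := mod
    -- the direct sum of the `E n` is injective
    have hD : InjMod Rᵐᵒᵖ (DirectSum ℕ E) := by
      refine injMod_of_hom_zero hind (fun f => ?_)
      refine DirectSum.linearMap_ext _ (fun n => ?_)
      rw [hhom (E n) (hE n) (f ∘ₗ DirectSum.lof Rᵐᵒᵖ ℕ E n), LinearMap.zero_comp]
    set I : Submodule Rᵐᵒᵖ Rᵐᵒᵖ := ⨆ n, c n with hI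
    set ψ : ∀ n, ↥I →ₗ[Rᵐᵒᵖ] E n :=
      fun n => (e n) ∘ₗ ((c n).mkQ ∘ₗ I.subtype) with hψdef
    have hmem : ∀ x : ↥I, ∃ n, (x : Rᵐᵒᵖ) ∈ c n :=
      fun x => (Submodule.mem_iSup_of_chain c _).mp x.2
    have hψ0 : ∀ (x : ↥I) (n : ℕ), (x : Rᵐᵒᵖ) ∈ c n → ψ n x = 0 := by
      intro x n hx
      show e n (Submodule.Quotient.mk ((x : Rᵐᵒᵖ))) = 0
      rw [(Submodule.Quotient.mk_eq_zero _).mpr hx, map_zero]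
    let φf : ↥I → DirectSum ℕ E := fun x =>
      DFinsupp.mk' (fun n => ψ n x)
        (Trunc.mk ⟨Multiset.range (Classical.choose (hmem x) + 1), fun n => by
          by_cases h : n < Classical.choose (hmem x) + 1
          · exact Or.inl (Multiset.mem_range.mpr h)
          · exact Or.inr (hψ0 x n (c.monotone (by omega) (Classical.choose_spec (hmem x))))⟩)
    have hφf : ∀ (x : ↥I) (n : ℕ), φf x n = ψ n x := fun x n => rfl
    let φ : ↥I →ₗ[Rᵐᵒᵖ] DirectSum ℕ E :=
      { toFun := φf
        map_add' := by
          intro x y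
          refine DFinsupp.ext (fun n => ?_)
          rw [DFinsupp.add_apply, hφf, hφf, hφf, map_add]
        map_smul' := by
          intro r x
          refine DFinsupp.ext (fun n => ?_)
          simp only [RingHom.id_apply]
          rw [DFinsupp.smul_apply, hφf, hφf, map_smul] }
    obtain ⟨h, hh⟩ := hD ↥I Rᵐᵒᵖ I.subtype I.injective_subtype φ
    obtain ⟨s, hs⟩ := (h 1).support'.out
    have hbound : ∀ n : ℕ, (s.toFinset.sup _root_.id) < n → (h 1) n = 0 := by
      intro n hn
      rcases hs n with hns | h0
      · have hle := Finset.le_sup (f := _root_.id) (Multiset.mem_toFinset.mpr hns)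
        simp only [id_eq] at hle
        omega
      · exact h0
    refine ⟨s.toFinset.sup _root_.id + 1, ?_⟩
    intro q hq
    have hIleq : ∀ n : ℕ, s.toFinset.sup _root_.id + 1 ≤ n → I ≤ c n := by
      intro n hn x hx
      have h1 : h x = φ ⟨x, hx⟩ := LinearMap.congr_fun hh ⟨x, hx⟩
      have h2 : h x = x • h 1 := by
        conv_lhs => rw [show x = x • (1 : Rᵐᵒᵖ) by rw [smul_eq_mul, mul_one]]
        rw [map_smul]
      have h3 : ψ n ⟨x, hx⟩ = 0 := by
        have h4 : φ (⟨x, hx⟩ : ↥I) n = (x • h 1) n := by rw [← h1, h2]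
        rw [DFinsupp.smul_apply, hbound n (by omega), smul_zero] at h4
        exact h4
      have h5 : Submodule.Quotient.mk (p := c n) x = 0 := by
        apply he n
        rw [map_zero]
        exact h3
      exact (Submodule.Quotient.mk_eq_zero _).mp h5
    apply le_antisymm (c.monotone hq)
    exact le_trans (le_iSup c q) (hIleq _ le_rfl)
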